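/- Let K ≥ 2, let z ∈ ℝ^K have a strict maximum at index M, and let p̂ ∈ (1/K, 1). Then there exists a unique temperature T > 0 satisfying exp(z_M/T) / Σ_{j=1}^K exp(z_j/T) = p̂; that is, the confidence equation implicitly defines a temperature function T = β(z) of the logits. -/

import Mathlib

open Real Finset Filter Topology

/-- For a logit vector with strict maximum at `M` and any target
`p̂ ∈ (1/K, 1)`, there is a unique positive temperature solving the confidence equation. -/
theorem exists_unique_calibrating_temperature
    (K : ℕ) (hK : 2 ≤ K) (z : Fin K → ℝ) (M : Fin K)
    (hstrict : ∀ j ≠ M, z j < z M)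
    (p : ℝ) (hp : p ∈ Set.Ioo (1 / (K : ℝ)) 1) :
    ∃! T : ℝ, 0 < T ∧ Real.exp (z M / T) / (∑ j, Real.exp (z j / T)) = p := by
  obtain ⟨hp1, hp2⟩ := hp
  have hK2 : (2:ℝ) ≤ (K:ℝ) := by exact_mod_cast hK
  have hKpos : (0:ℝ) < K := by linarith
  have hp0 : 0 < p := lt_trans (by positivity) hp1
  set g : ℝ → ℝ := fun T => ∑ j, Real.exp ((z j - z M) / T) with hg
  have hkey : ∀ T : ℝ, 0 < T →
      (Real.exp (z M / T) / (∑ j, Real.exp (z j / T)) = p ↔ g T = 1/p) := by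
    intro T hT
    have hsum : (∑ j, Real.exp (z j / T)) = Real.exp (z M / T) * g T := by
      rw [hg, Finset.mul_sum]
      refine Finset.sum_congr rfl fun j _ => ?_
      rw [← Real.exp_add]
      congr 1
      field_simp
      ring
    rw [hsum, div_mul_eq_div_div, div_self (Real.exp_ne_zero _), one_div,
      inv_eq_iff_eq_inv, one_div]
  have hmono : StrictMonoOn g (Set.Ioi 0) := by
    intro s hs t ht hst
    apply Finset.sum_lt_sum
    · intro j _
      apply Real.exp_le_exp.2
      have hle : z j - z M ≤ 0 := by
        rcases eq_or_ne j M with rfl | h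
        · simp
        · linarith [hstrict j h]
      rw [div_le_div_iff₀ hs ht]
      exact mul_le_mul_of_nonpos_left hst.le hle
    · obtain ⟨j, hj⟩ := Fintype.exists_ne_of_one_lt_card (by simp; omega) M
      refine ⟨j, mem_univ j, ?_⟩
      apply Real.exp_lt_exp.2
      have hlt : z j - z M < 0 := sub_neg.2 (hstrict j hj)
      rw [div_lt_div_iff₀ hs ht]
      exact mul_lt_mul_of_neg_left hst hlt
  have hcont : ContinuousOn g (Set.Ioi 0) := by
    refine continuousOn_finset_sum _ fun j _ => ?_
    exact Real.continuous_exp.comp_continuousOn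
      (continuousOn_const.div continuousOn_id fun x hx => ne_of_gt hx)
  have hlim0 : Tendsto g (𝓝[>] (0:ℝ)) (𝓝 1) := by
    have h1 : Tendsto g (𝓝[>] (0:ℝ))
        (𝓝 (∑ j : Fin K, if j = M then (1:ℝ) else 0)) := by
      apply tendsto_finset_sum
      intro j _
      rcases eq_or_ne j M with rfl | h
      · simp only [sub_self, zero_div, Real.exp_zero, if_pos rfl]
        exact tendsto_const_nhds
      · rw [if_neg h]
        have hneg : z j - z M < 0 := sub_neg.2 (hstrict j h)
        have htop : Tendsto (fun T : ℝ => (z j - z M) / T) (𝓝[>] (0:ℝ)) atBot := by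
          have hinv : Tendsto (fun T : ℝ => T⁻¹) (𝓝[>] (0:ℝ)) atTop :=
            tendsto_inv_nhdsGT_zero
          have := Tendsto.const_mul_atTop_of_neg hneg hinv
          simpa [div_eq_mul_inv] using this
        exact Real.tendsto_exp_atBot.comp htop
    simpa [Finset.sum_ite_eq'] using h1
  have hlimtop : Tendsto g atTop (𝓝 (K:ℝ)) := by
    have h1 : Tendsto g atTop (𝓝 (∑ _j : Fin K, (1:ℝ))) := by
      apply tendsto_finset_sum
      intro j _
      have h0 : Tendsto (fun T : ℝ => (z j - z M) / T) atTop (𝓝 0) := by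
        simpa [div_eq_mul_inv] using tendsto_inv_atTop_zero.const_mul (z j - z M)
      simpa [Function.comp_def] using (Real.continuous_exp.tendsto 0).comp h0
    simpa using h1
  have h1p : 1 < 1/p := one_lt_one_div hp0 hp2
  have hpK : 1/p < (K:ℝ) := by
    rw [div_lt_iff₀ hp0]
    have := (div_lt_iff₀ hKpos).1 hp1
    nlinarith
  have ha : ∀ᶠ T in 𝓝[>] (0:ℝ), g T < 1/p := hlim0.eventually (eventually_lt_nhds h1p)
  obtain ⟨a, hga, ha0⟩ := (ha.and self_mem_nhdsWithin).exists
  have hb : ∀ᶠ T in atTop, 1/p < g T := hlimtop.eventually (eventually_gt_nhds hpK)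
  obtain ⟨b, hgb, hab⟩ := (hb.and (eventually_gt_atTop a)).exists
  have hsub : Set.Icc a b ⊆ Set.Ioi 0 := fun x hx => lt_of_lt_of_le ha0 hx.1
  obtain ⟨T, hTmem, hgT⟩ := intermediate_value_Icc hab.le (hcont.mono hsub)
    ⟨hga.le, hgb.le⟩
  have hT0 : 0 < T := hsub hTmem
  refine ⟨T, ⟨hT0, (hkey T hT0).2 hgT⟩, ?_⟩
  rintro T' ⟨hT'0, heq⟩
  exact hmono.injOn hT'0 hT0 (((hkey T' hT'0).1 heq).trans hgT.symm)
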